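/- Suppose φ is a commutator group-like element of k⟨⟨X,Y⟩⟩ and μ ∈ k satisfy the 3-cycle relation e^{μX/2}φ(Z,X)e^{μZ/2}φ(Y,Z)e^{μY/2}φ(X,Y)=1 with Z=−X−Y. Then, comparing coefficients of the monomial XY, one has c₂(φ) = μ²/24, where c₂(φ) is the coefficient of XY in φ. -/

import Mathlib

open scoped BigOperators

/-- Words in the letters `X = 0`, `Y = 1`, ... -/
abbrev Word (n : ℕ) := List (Fin n)

/-- Coefficient families of non-commutative formal power series `k⟨⟨X₁,…,Xₙ⟩⟩`:
a series is recorded by its coefficient at each word. -/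
abbrev NC (k : Type*) (n : ℕ) := Word n → k

/-- The list of shuffles (with multiplicity) of two words. -/
def shuffle {α : Type*} : List α → List α → List (List α)
  | [], v => [v]
  | u, [] => [u]
  | a :: u, b :: v =>
      ((shuffle u (b :: v)).map (a :: ·)) ++ ((shuffle (a :: u) v).map (b :: ·))
  termination_by u v => u.length + v.length
  decreasing_by all_goals simp +arith +decide

variable {k : Type*}

/-- `φ` is group-like for the coproduct with `X`, `Y` primitive:
`Δφ = φ ⊗ φ` and constant term 1, expressed coefficientwise via shuffles. -/
def IsGroupLike [CommRing k] (φ : NC k 2) : Prop :=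
  φ [] = 1 ∧ ∀ u v : Word 2, φ u * φ v = ((shuffle u v).map φ).sum

/-- `φ` is Lie-like (primitive): `Δφ = φ⊗1 + 1⊗φ`, coefficientwise. -/
def IsLieLike [CommRing k] (φ : NC k 2) : Prop :=
  φ [] = 0 ∧ ∀ u v : Word 2, u ≠ [] → v ≠ [] → ((shuffle u v).map φ).sum = 0

/-- commutator group-like: group-like with vanishing coefficients of `X` and `Y`. -/
def IsCommGroupLike [CommRing k] (φ : NC k 2) : Prop :=
  IsGroupLike φ ∧ φ [0] = 0 ∧ φ [1] = 0

/-- A degree-one element `a·T` of `A[[T]]`, modelling a degree-1 element of a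
completed graded algebra. -/
noncomputable def lin {A : Type*} [Ring A] (a : A) : PowerSeries A :=
  PowerSeries.mk fun n => if n = 1 then a else 0

/-- Substitution `φ(X₁, X₂)` of a non-commutative power series `φ` at two
elements (of positive valuation) of a completed graded algebra, where the
completion is modelled by `A[[T]]` (degree `n` part = coefficient of `Tⁿ`). -/
noncomputable def substPS [CommRing k] {A : Type*} [Ring A] [Algebra k A]
    (φ : NC k 2) (P Q : PowerSeries A) : PowerSeries A :=
  PowerSeries.mk fun n =>
    ∑ m ∈ Finset.range (n + 1), ∑ u : Fin m → Fin 2,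
      φ (List.ofFn u) • PowerSeries.coeff (R := A) n (((List.ofFn u).map ![P, Q]).prod)

/-- Exponential of a power series (meaningful when the constant term vanishes). -/
noncomputable def expPS (k : Type*) [Field k] {A : Type*} [Ring A] [Algebra k A]
    (s : PowerSeries A) : PowerSeries A :=
  PowerSeries.mk fun n =>
    ∑ m ∈ Finset.range (n + 1), (Nat.factorial m : k)⁻¹ • PowerSeries.coeff (R := A) n (s ^ m)

/-- Coefficients of the multiplicative inverse of a power series with
constant term `1`. -/
noncomputable def invCoeff {A : Type*} [Ring A] (s : PowerSeries A) : ℕ → A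
  | 0 => 1
  | n + 1 => -∑ j : Fin (n + 1), invCoeff s j.1 * PowerSeries.coeff (R := A) (n + 1 - j.1) s
  termination_by n => n
  decreasing_by exact j.2

/-- Inverse of a power series with constant term `1`. -/
noncomputable def PSInv {A : Type*} [Ring A] (s : PowerSeries A) : PowerSeries A :=
  PowerSeries.mk (invCoeff s)

/-- Relations presenting (the enveloping algebra of) the pure sphere braid Lie
algebra `𝔓₅` on 5 strings. -/
inductive P5Rel (k : Type*) [CommRing k] :
    FreeAlgebra k (Fin 5 × Fin 5) → FreeAlgebra k (Fin 5 × Fin 5) → Prop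
  | diag (i : Fin 5) : P5Rel k (FreeAlgebra.ι k (i, i)) 0
  | symm (i j : Fin 5) : P5Rel k (FreeAlgebra.ι k (i, j)) (FreeAlgebra.ι k (j, i))
  | rowsum (i : Fin 5) : P5Rel k (∑ j : Fin 5, FreeAlgebra.ι k (i, j)) 0
  | disj (i j l m : Fin 5) (h : i ≠ l ∧ i ≠ m ∧ j ≠ l ∧ j ≠ m) :
      P5Rel k (FreeAlgebra.ι k (i, j) * FreeAlgebra.ι k (l, m))
              (FreeAlgebra.ι k (l, m) * FreeAlgebra.ι k (i, j))

/-- The (graded) enveloping algebra `U𝔓₅` of the pure sphere braid Lie algebra. -/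
abbrev P5A (k : Type*) [CommRing k] := RingQuot (P5Rel k)

/-- The generator `X_{ij}` of `U𝔓₅`. -/
noncomputable def Xg (k : Type*) [CommRing k] (i j : Fin 5) : P5A k :=
  RingQuot.mkAlgHom k (P5Rel k) (FreeAlgebra.ι k (i, j))

/-- Relations presenting (the enveloping algebra of) the infinitesimal braid
("chord diagram") Lie algebra `𝔞ₙ`. -/
inductive ARel (k : Type*) [CommRing k] (n : ℕ) :
    FreeAlgebra k (Fin n × Fin n) → FreeAlgebra k (Fin n × Fin n) → Prop
  | diag (i : Fin n) : ARel k n (FreeAlgebra.ι k (i, i)) 0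
  | symm (i j : Fin n) : ARel k n (FreeAlgebra.ι k (i, j)) (FreeAlgebra.ι k (j, i))
  | comm3 (i j l : Fin n) (h : i ≠ j ∧ i ≠ l ∧ j ≠ l) :
      ARel k n (FreeAlgebra.ι k (i, j) * (FreeAlgebra.ι k (i, l) + FreeAlgebra.ι k (j, l)))
               ((FreeAlgebra.ι k (i, l) + FreeAlgebra.ι k (j, l)) * FreeAlgebra.ι k (i, j))
  | comm4 (i j l m : Fin n)
      (h : i ≠ j ∧ i ≠ l ∧ i ≠ m ∧ j ≠ l ∧ j ≠ m ∧ l ≠ m) :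
      ARel k n (FreeAlgebra.ι k (i, j) * FreeAlgebra.ι k (l, m))
               (FreeAlgebra.ι k (l, m) * FreeAlgebra.ι k (i, j))

/-- The (graded) enveloping algebra `U𝔞ₙ`. -/
abbrev AA (k : Type*) [CommRing k] (n : ℕ) := RingQuot (ARel k n)

/-- The generator `t_{ij}` of `U𝔞ₙ`. -/
noncomputable def tg (k : Type*) [CommRing k] (n : ℕ) (i j : Fin n) : AA k n :=
  RingQuot.mkAlgHom k (ARel k n) (FreeAlgebra.ι k (i, j))

/-- The series `X` (i.e. the image of the first generator) in the model
`(FreeAlgebra k (Fin 2))[[T]]` of `k⟨⟨X,Y⟩⟩`. -/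
noncomputable def XF (k : Type*) [CommRing k] : PowerSeries (FreeAlgebra k (Fin 2)) :=
  lin (FreeAlgebra.ι k (0 : Fin 2))

/-- The series `Y`. -/
noncomputable def YF (k : Type*) [CommRing k] : PowerSeries (FreeAlgebra k (Fin 2)) :=
  lin (FreeAlgebra.ι k (1 : Fin 2))

/-- The series `Z = -X-Y`. -/
noncomputable def ZF (k : Type*) [CommRing k] : PowerSeries (FreeAlgebra k (Fin 2)) :=
  -XF k - YF k

/-- `φ(X_{ab}, X_{bc})` in the completed `U𝔓₅`. -/
noncomputable def S5 (k : Type*) [Field k] (φ : NC k 2) (a b c : Fin 5) :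
    PowerSeries (P5A k) :=
  substPS φ (lin (Xg k a b)) (lin (Xg k b c))

/-- The multiplicative 5-cycle relation
`φ(X₁₂,X₂₃)φ(X₃₄,X₄₅)φ(X₅₁,X₁₂)φ(X₂₃,X₃₄)φ(X₄₅,X₅₁) = 1` in the completed `U𝔓₅`. -/
def FiveCycleMul (k : Type*) [Field k] (φ : NC k 2) : Prop :=
  S5 k φ 0 1 2 * S5 k φ 2 3 4 * S5 k φ 4 0 1 * S5 k φ 1 2 3 * S5 k φ 3 4 0 = 1

/-- `t_{ij}` as a degree-one element of the completed `U𝔞₄`. -/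
noncomputable def lt (k : Type*) [Field k] (i j : Fin 4) : PowerSeries (AA k 4) :=
  lin (tg k 4 i j)

/-- Drinfel'd's pentagon equation
`φ(t₁₂,t₂₃+t₂₄)φ(t₁₃+t₂₃,t₃₄) = φ(t₂₃,t₃₄)φ(t₁₂+t₁₃,t₂₄+t₃₄)φ(t₁₂,t₂₃)`
in the completed `U𝔞₄` (strings are `0,1,2,3`). -/
def Pentagon (k : Type*) [Field k] (φ : NC k 2) : Prop :=
  substPS φ (lt k 0 1) (lt k 1 2 + lt k 1 3) * substPS φ (lt k 0 2 + lt k 1 2) (lt k 2 3) =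
    substPS φ (lt k 1 2) (lt k 2 3) *
      substPS φ (lt k 0 1 + lt k 0 2) (lt k 1 3 + lt k 2 3) * substPS φ (lt k 0 1) (lt k 1 2)

/-- The 2-cycle relation `φ(X,Y)φ(Y,X) = 1` in `k⟨⟨X,Y⟩⟩`. -/
def TwoCycleMul (k : Type*) [Field k] (φ : NC k 2) : Prop :=
  substPS φ (XF k) (YF k) * substPS φ (YF k) (XF k) = 1

/-- The 3-cycle relation
`e^{μX/2}φ(Z,X)e^{μZ/2}φ(Y,Z)e^{μY/2}φ(X,Y) = 1`, `Z = -X-Y`, in `k⟨⟨X,Y⟩⟩`. -/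
def ThreeCycleMul (k : Type*) [Field k] (μ : k) (φ : NC k 2) : Prop :=
  expPS k ((μ / 2) • XF k) * substPS φ (ZF k) (XF k) * expPS k ((μ / 2) • ZF k) *
      substPS φ (YF k) (ZF k) * expPS k ((μ / 2) • YF k) * substPS φ (XF k) (YF k) = 1

/-- The special 3-cycle relation `φ(Z,X)φ(Y,Z)φ(X,Y) = 1`, `Z = -X-Y`. -/
def Special3 (k : Type*) [Field k] (φ : NC k 2) : Prop :=
  substPS φ (ZF k) (XF k) * substPS φ (YF k) (ZF k) * substPS φ (XF k) (YF k) = 1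

/-- Drinfel'd's first hexagon equation, for elements `a = t₁₂`, `b = t₁₃`, `c = t₂₃`:
`exp(μ(t₁₃+t₂₃)/2) = φ(t₁₃,t₁₂)exp(μt₁₃/2)φ(t₁₃,t₂₃)⁻¹exp(μt₂₃/2)φ(t₁₂,t₂₃)`. -/
def Hex1 (k : Type*) [Field k] {A : Type*} [Ring A] [Algebra k A]
    (μ : k) (φ : NC k 2) (a b c : A) : Prop :=
  expPS k ((μ / 2) • (lin b + lin c)) =
    substPS φ (lin b) (lin a) * expPS k ((μ / 2) • lin b) * PSInv (substPS φ (lin b) (lin c)) *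
      expPS k ((μ / 2) • lin c) * substPS φ (lin a) (lin c)

/-- Drinfel'd's second hexagon equation, for elements `a = t₁₂`, `b = t₁₃`, `c = t₂₃`:
`exp(μ(t₁₂+t₁₃)/2) = φ(t₂₃,t₁₃)⁻¹exp(μt₁₃/2)φ(t₁₂,t₁₃)exp(μt₁₂/2)φ(t₁₂,t₂₃)⁻¹`. -/
def Hex2 (k : Type*) [Field k] {A : Type*} [Ring A] [Algebra k A]
    (μ : k) (φ : NC k 2) (a b c : A) : Prop :=
  expPS k ((μ / 2) • (lin a + lin b)) =
    PSInv (substPS φ (lin c) (lin b)) * expPS k ((μ / 2) • lin b) * substPS φ (lin a) (lin b) *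
      expPS k ((μ / 2) • lin a) * PSInv (substPS φ (lin a) (lin c))

section Aux

variable {k : Type*} [Field k] {A : Type*} [Ring A] [Algebra k A]

private lemma coeff_lin (a : A) (n : ℕ) :
    PowerSeries.coeff (R := A) n (lin a) = if n = 1 then a else 0 := by
  simp [lin]

private lemma coeff_smul' (c : k) (s : PowerSeries A) (n : ℕ) :
    PowerSeries.coeff (R := A) n (c • s) = c • PowerSeries.coeff (R := A) n s := rfl

private lemma smul_lin (c : k) (a : A) : c • lin a = lin (c • a) := by
  ext n
  rw [coeff_smul', coeff_lin, coeff_lin]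
  split <;> simp

private lemma c0_mul (f g : PowerSeries A) :
    PowerSeries.coeff (R := A) 0 (f * g) = PowerSeries.coeff (R := A) 0 f * PowerSeries.coeff (R := A) 0 g := by
  rw [PowerSeries.coeff_mul, Finset.Nat.sum_antidiagonal_eq_sum_range_succ_mk]
  simp

private lemma c1_mul (f g : PowerSeries A) :
    PowerSeries.coeff (R := A) 1 (f * g) =
      PowerSeries.coeff (R := A) 0 f * PowerSeries.coeff (R := A) 1 g +
      PowerSeries.coeff (R := A) 1 f * PowerSeries.coeff (R := A) 0 g := by
  rw [PowerSeries.coeff_mul, Finset.Nat.sum_antidiagonal_eq_sum_range_succ_mk]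
  simp [Finset.sum_range_succ]

private lemma c2_mul (f g : PowerSeries A) :
    PowerSeries.coeff (R := A) 2 (f * g) =
      PowerSeries.coeff (R := A) 0 f * PowerSeries.coeff (R := A) 2 g +
      PowerSeries.coeff (R := A) 1 f * PowerSeries.coeff (R := A) 1 g +
      PowerSeries.coeff (R := A) 2 f * PowerSeries.coeff (R := A) 0 g := by
  rw [PowerSeries.coeff_mul, Finset.Nat.sum_antidiagonal_eq_sum_range_succ_mk]
  simp [Finset.sum_range_succ]

private lemma c0_lin_mul (a b : A) : PowerSeries.coeff (R := A) 0 (lin a * lin b) = 0 := by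
  simp [c0_mul, coeff_lin]

private lemma c1_lin_mul (a b : A) : PowerSeries.coeff (R := A) 1 (lin a * lin b) = 0 := by
  simp [c1_mul, coeff_lin]

private lemma c2_lin_mul (a b : A) : PowerSeries.coeff (R := A) 2 (lin a * lin b) = a * b := by
  simp [c2_mul, coeff_lin]

private lemma sum_fn_zero (g : (Fin 0 → Fin 2) → A) :
    ∑ u : Fin 0 → Fin 2, g u = g ![] := by
  rw [Fintype.sum_subsingleton g ![]]

private lemma sum_fn_one (g : (Fin 1 → Fin 2) → A) :
    ∑ u : Fin 1 → Fin 2, g u = ∑ i : Fin 2, g (fun _ => i) := by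
  apply Fintype.sum_equiv (Equiv.funUnique (Fin 1) (Fin 2))
  intro u; congr 1; ext j; simp [Equiv.funUnique]; congr; exact Subsingleton.elim _ _

private lemma sum_fn_two (g : (Fin 2 → Fin 2) → A) :
    ∑ u : Fin 2 → Fin 2, g u = ∑ i : Fin 2, ∑ j : Fin 2, g ![i, j] := by
  rw [Fintype.sum_equiv (piFinTwoEquiv fun _ => Fin 2) g (fun p => g ![p.1, p.2]),
    Fintype.sum_prod_type]
  intro u; congr 1; ext j; fin_cases j <;> simp [piFinTwoEquiv]

private lemma substPS_c0 (φ : NC k 2) (hφ1 : φ [] = 1) (p q : A) :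
    PowerSeries.coeff (R := A) 0 (substPS φ (lin p) (lin q)) = 1 := by
  simp [substPS, sum_fn_zero, hφ1]

private lemma substPS_c1 (φ : NC k 2) (p q : A) :
    PowerSeries.coeff (R := A) 1 (substPS φ (lin p) (lin q)) = φ [0] • p + φ [1] • q := by
  simp [substPS, Finset.sum_range_succ, sum_fn_zero, sum_fn_one, Fin.sum_univ_two,
    List.ofFn_succ, coeff_lin]

private lemma substPS_c2 (φ : NC k 2) (p q : A) :
    PowerSeries.coeff (R := A) 2 (substPS φ (lin p) (lin q)) =
      φ [0, 0] • (p * p) + φ [0, 1] • (p * q) + φ [1, 0] • (q * p) + φ [1, 1] • (q * q) := by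
  simp [substPS, Finset.sum_range_succ, sum_fn_zero, sum_fn_one, sum_fn_two,
    Fin.sum_univ_two, List.ofFn_succ, coeff_lin, c2_lin_mul]
  abel

private lemma expPS_c0 (b : A) : PowerSeries.coeff (R := A) 0 (expPS k (lin b)) = 1 := by
  simp [expPS]

private lemma expPS_c1 (b : A) : PowerSeries.coeff (R := A) 1 (expPS k (lin b)) = b := by
  simp [expPS, Finset.sum_range_succ, coeff_lin, PowerSeries.coeff_one]

private lemma expPS_c2 (b : A) :
    PowerSeries.coeff (R := A) 2 (expPS k (lin b)) = (2 : k)⁻¹ • (b * b) := by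
  simp [expPS, Finset.sum_range_succ, coeff_lin, PowerSeries.coeff_one, pow_two,
    c2_lin_mul, Nat.factorial]

end Aux
/-- If a commutator group-like `φ` and `μ ∈ k` satisfy the 3-cycle relation,
then comparing the coefficients of `XY` gives `c₂(φ) = μ²/24`. -/
theorem statement11 (k : Type*) [Field k] [CharZero k] (φ : NC k 2)
    (hφ : IsCommGroupLike φ) (μ : k) (h3 : ThreeCycleMul k μ φ) :
    φ [0, 1] = μ ^ 2 / 24 := by
  obtain ⟨⟨h1, hsh⟩, hx0, hy0⟩ := hφ
  -- consequences of group-likeness in degree 2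
  have s00 : shuffle ([0] : Word 2) [0] = [[0,0],[0,0]] := by simp [shuffle]
  have s01 : shuffle ([0] : Word 2) [1] = [[0,1],[1,0]] := by simp [shuffle]
  have s11 : shuffle ([1] : Word 2) [1] = [[1,1],[1,1]] := by simp [shuffle]
  have hxx : φ [0,0] = 0 := by
    have h := hsh [0] [0]; rw [s00] at h; simp [hx0] at h; linear_combination -1/2 * h
  have hyy : φ [1,1] = 0 := by
    have h := hsh [1] [1]; rw [s11] at h; simp [hy0] at h; linear_combination -1/2 * h
  have hyx : φ [1,0] = -φ [0,1] := by
    have h := hsh [0] [1]; rw [s01] at h; simp [hx0] at h; linear_combination -h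
  set x := FreeAlgebra.ι k (0 : Fin 2) with hxdef
  set y := FreeAlgebra.ι k (1 : Fin 2) with hydef
  have hX : XF k = lin x := rfl
  have hY : YF k = lin y := rfl
  have hZ : ZF k = lin (-x - y) := by
    ext n
    simp only [ZF, XF, YF, map_sub, map_neg, coeff_lin]
    by_cases hn : n = 1 <;> simp [hn, hxdef, hydef]
  have h3' := h3
  unfold ThreeCycleMul at h3'
  rw [hZ, hX, hY, smul_lin, smul_lin, smul_lin] at h3'
  have key : PowerSeries.coeff (R := FreeAlgebra k (Fin 2)) 2
      (expPS k (lin ((μ / 2) • x)) * substPS φ (lin (-x - y)) (lin x) *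
        expPS k (lin ((μ / 2) • (-x - y))) * substPS φ (lin y) (lin (-x - y)) *
        expPS k (lin ((μ / 2) • y)) * substPS φ (lin x) (lin y)) = 0 := by
    rw [h3']
    simp [PowerSeries.coeff_one]
  simp only [c2_mul, c1_mul, c0_mul, substPS_c0 φ h1, substPS_c1 φ, substPS_c2 φ,
    expPS_c0, expPS_c1, expPS_c2] at key
  simp only [hx0, hy0, hxx, hyy, hyx, zero_smul, add_zero, zero_add, one_mul, mul_one,
    zero_mul, mul_zero, neg_smul] at key
  -- push down to a 3×3 matrix representation and read off the (0,2) entry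
  set Ma : Matrix (Fin 3) (Fin 3) k :=
    Matrix.of (fun i j : Fin 3 => if i = 0 ∧ j = 1 then (1:k) else 0) with hMa
  set Mb : Matrix (Fin 3) (Fin 3) k :=
    Matrix.of (fun i j : Fin 3 => if i = 1 ∧ j = 2 then (1:k) else 0) with hMb
  set f : FreeAlgebra k (Fin 2) →ₐ[k] Matrix (Fin 3) (Fin 3) k :=
    FreeAlgebra.lift k ![Ma, Mb] with hf
  have keyf := congrArg (fun a => f a 0 2) key
  have hfx : f x = Ma := by simp [hf, hxdef]
  have hfy : f y = Mb := by simp [hf, hydef]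
  simp only [map_add, map_mul, map_smul, map_neg, map_sub, map_zero, hfx, hfy] at keyf
  simp only [hMa, hMb, Matrix.add_apply, Matrix.smul_apply, Matrix.neg_apply,
    Matrix.sub_apply, Matrix.mul_apply, Fin.sum_univ_three, Matrix.of_apply,
    Matrix.zero_apply, smul_eq_mul] at keyf
  norm_num [show ((2:Fin 3) = 1) = False from by simp [Fin.ext_iff],
    show ((2:Fin 3) = 0 ∧ (2:Fin 3) = 1) = False from by simp [Fin.ext_iff]] at keyf
  linear_combination keyf / 3
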